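/- If t > 0 and α₁ ≥ α₂ > 0 are real numbers, then for every s ∈ [(α₂/α₁)^{2/q̃}·t, t] one has g(α₂, s) ≥ g(α₁, t). -/
import Mathlib


open Real Set

/-- If t > 0 and α₁ ≥ α₂ > 0 then for every s ∈ [(α₂/α₁)^{2/q̃}·t, t] one has
g(α₂,s) ≥ g(α₁,t). -/
theorem stmt_3 (N : ℕ) (hN : 3 ≤ N) (q : ℝ)
    (hq : (2 * (N : ℝ) / ((N : ℝ) + 2) < q ∧ q < 2) ∨ (2 < q ∧ q < (N : ℝ)))
    (C₀ S : ℝ) (hC₀ : 0 < C₀) (hS : 0 < S)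
    (qt qp : ℝ) (hqt : qt = max 2 q)
    (hqp : qp = max (2 * (N : ℝ) / ((N : ℝ) - 2)) ((N : ℝ) * q / ((N : ℝ) - q)))
    (g : ℝ → ℝ → ℝ)
    (hg : ∀ α t : ℝ, g α t =
      1 / qt - C₀ * α ^ 2 * t ^ (-qt) - C₀ * S ^ (-(qp / qt)) * t ^ (qp - qt))
    (t : ℝ) (ht : 0 < t) (α₁ α₂ : ℝ) (hα₂ : 0 < α₂) (h12 : α₂ ≤ α₁) :
    ∀ s ∈ Set.Icc ((α₂ / α₁) ^ (2 / qt) * t) t, g α₁ t ≤ g α₂ s := by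
  have hα₁ : 0 < α₁ := lt_of_lt_of_le hα₂ h12
  have hqt2 : (2:ℝ) ≤ qt := hqt ▸ le_max_left _ _
  have hqtpos : 0 < qt := lt_of_lt_of_le two_pos hqt2
  have hN3 : (3:ℝ) ≤ (N:ℝ) := by exact_mod_cast hN
  have hqtqp : qt ≤ qp := by
    rcases hq with ⟨h1, h2⟩ | ⟨h1, h2⟩
    · have hqt' : qt = 2 := by rw [hqt, max_eq_left h2.le]
      have : (2:ℝ) ≤ 2 * (N:ℝ) / ((N:ℝ) - 2) := by
        rw [le_div_iff₀ (by linarith)]; linarith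
      rw [hqt', hqp]
      exact le_trans this (le_max_left _ _)
    · have hqt' : qt = q := by rw [hqt, max_eq_right h1.le]
      have : q ≤ (N:ℝ) * q / ((N:ℝ) - q) := by
        rw [le_div_iff₀ (by linarith)]; nlinarith
      rw [hqt', hqp]
      exact le_trans this (le_max_right _ _)
  intro s hs
  obtain ⟨hs1, hs2⟩ := hs
  have hrpos : (0:ℝ) < (α₂ / α₁) ^ (2 / qt) :=
    Real.rpow_pos_of_pos (div_pos hα₂ hα₁) _
  have hspos : 0 < s := lt_of_lt_of_le (mul_pos hrpos ht) hs1
  rw [hg, hg]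
  -- third term
  have hB : C₀ * S ^ (-(qp / qt)) * s ^ (qp - qt) ≤ C₀ * S ^ (-(qp / qt)) * t ^ (qp - qt) := by
    apply mul_le_mul_of_nonneg_left
      (Real.rpow_le_rpow hspos.le hs2 (by linarith))
    positivity
  -- second term
  have hkey : (α₂ / α₁) ^ (2:ℝ) * t ^ qt ≤ s ^ qt := by
    have h1 : ((α₂ / α₁) ^ (2 / qt) * t) ^ qt = (α₂ / α₁) ^ (2:ℝ) * t ^ qt := by
      rw [Real.mul_rpow hrpos.le ht.le, ← Real.rpow_mul (div_pos hα₂ hα₁).le,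
        div_mul_cancel₀ _ (ne_of_gt hqtpos)]
    rw [← h1]
    exact Real.rpow_le_rpow (mul_pos hrpos ht).le hs1 hqtpos.le
  have hkey' : α₂ ^ 2 * t ^ qt ≤ α₁ ^ 2 * s ^ qt := by
    have h2 : α₁ ^ 2 * ((α₂ / α₁) ^ (2:ℝ) * t ^ qt) = α₂ ^ 2 * t ^ qt := by
      rw [Real.rpow_two]; field_simp
    nlinarith [mul_le_mul_of_nonneg_left hkey (by positivity : (0:ℝ) ≤ α₁ ^ 2)]
  have hA : C₀ * α₂ ^ 2 * s ^ (-qt) ≤ C₀ * α₁ ^ 2 * t ^ (-qt) := by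
    have hst : (0:ℝ) < s ^ qt := Real.rpow_pos_of_pos hspos _
    have htt : (0:ℝ) < t ^ qt := Real.rpow_pos_of_pos ht _
    rw [Real.rpow_neg hspos.le, Real.rpow_neg ht.le, ← div_eq_mul_inv, ← div_eq_mul_inv,
      div_le_div_iff₀ hst htt]
    nlinarith
  linarith
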